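/- Let m > 2, δ(x₁) = ε + κ₀|x₁|^m, μ > 0, λ+μ > 0, and for x₁ > 0 set ū₁⁽¹⁾ = (2x₂+δ)/(2δ), ũ₁⁽¹⁾ = ((x₂/δ)²−1/4)(2−μ/(λ+2μ))(κ₀/3)(m(m−1)/2)x₂x₁^{m−2}, ũ₁⁽²⁾ = ((x₂/δ)²−1/4)(1−μ/(λ+2μ))(mκ₀/2)x₁^{m−1}. With R₁₁ := 2m²κ₀² x₁^{2m−2}x₂/δ³ and R₁₂ := −2m²κ₀²(λ+μ)/(λ+2μ) · x₁^{2m−2}x₂/δ³, the identity (λ+2μ)(∂_{x₁x₁}ū₁⁽¹⁾ − R₁₁) + μ∂_{x₂x₂}ũ₁⁽¹⁾ + (λ+μ)(∂_{x₁x₂}ũ₁⁽²⁾ − R₁₂) = 0 holds, where ∂_{x₁x₁}ū₁⁽¹⁾ = −m(m−1)κ₀x₁^{m−2}x₂/δ² + R₁₁, ∂_{x₂x₂}ũ₁⁽¹⁾ = m(m−1)κ₀(2λ+3μ)/(λ+2μ)·x₁^{m−2}x₂/δ², ∂_{x₁x₂}ũ₁⁽²⁾ = m(m−1)κ₀(λ+μ)/(λ+2μ)·x₁^{m−2}x₂/δ²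 + R₁₂. -/

import Mathlib

open Real Filter

set_option maxHeartbeats 2000000

theorem stmt_13 (m ε κ l μ : ℝ) (hm : 2 < m) (hε : 0 < ε) (hκ : 0 < κ)
    (hμ : 0 < μ) (hlμ : 0 < l + μ) (x y : ℝ) (hx : 0 < x) :
    (l + 2 * μ) *
        ((deriv (fun a =>
            deriv (fun a' => (2 * y + (ε + κ * |a'| ^ m)) / (2 * (ε + κ * |a'| ^ m))) a) x) -
          2 * m ^ 2 * κ ^ 2 * x ^ (2 * m - 2) * y / (ε + κ * |x| ^ m) ^ 3) +
      μ *
        (deriv (fun b =>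
          deriv (fun b' =>
            ((b' / (ε + κ * |x| ^ m)) ^ 2 - 1/4) * (2 - μ / (l + 2 * μ)) * (κ / 3) *
              (m * (m - 1) / 2) * b' * x ^ (m - 2)) b) y) +
      (l + μ) *
        ((deriv (fun b =>
            deriv (fun a =>
              ((b / (ε + κ * |a| ^ m)) ^ 2 - 1/4) * (1 - μ / (l + 2 * μ)) * (m * κ / 2) *
                a ^ (m - 1)) x) y) -
          (-(2 * m ^ 2 * κ ^ 2 * (l + μ) / (l + 2 * μ)) * x ^ (2 * m - 2) * y /
            (ε + κ * |x| ^ m) ^ 3)) = 0 := by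
  have hx' : x ≠ 0 := hx.ne'
  have hl2 : 0 < l + 2 * μ := by linarith
  have hdpos : ∀ a : ℝ, 0 < a → 0 < ε + κ * a ^ m := by
    intro a ha; positivity
  have hd : 0 < ε + κ * x ^ m := hdpos x hx
  have hδ : ∀ a : ℝ, 0 < a →
      HasDerivAt (fun t : ℝ => ε + κ * t ^ m) (κ * (m * a ^ (m - 1))) a := by
    intro a ha
    exact ((Real.hasDerivAt_rpow_const (Or.inl ha.ne')).const_mul κ).const_add ε
  rw [abs_of_pos hx]
  -- Term 1 inner derivative
  have hA : ∀ a : ℝ, 0 < a →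
      deriv (fun a' => (2 * y + (ε + κ * |a'| ^ m)) / (2 * (ε + κ * |a'| ^ m))) a
        = -(y * (κ * (m * a ^ (m - 1)))) / (ε + κ * a ^ m) ^ 2 := by
    intro a ha
    have hpos := hdpos a ha
    have hev : (fun a' => (2 * y + (ε + κ * |a'| ^ m)) / (2 * (ε + κ * |a'| ^ m)))
        =ᶠ[nhds a] (fun a' => (2 * y + (ε + κ * a' ^ m)) / (2 * (ε + κ * a' ^ m))) :=
      (eventually_gt_nhds ha).mono (fun t ht => by simp only [abs_of_pos ht])
    rw [hev.deriv_eq]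
    have hnum : HasDerivAt (fun a' => 2 * y + (ε + κ * a' ^ m)) (κ * (m * a ^ (m - 1))) a :=
      (hδ a ha).const_add (2 * y)
    have hden := (hδ a ha).const_mul 2
    have hdiv := hnum.div hden (by positivity)
    erw [hdiv.deriv]
    field_simp
    ring
  -- Term 1 outer derivative
  have hT1 : deriv (fun a =>
      deriv (fun a' => (2 * y + (ε + κ * |a'| ^ m)) / (2 * (ε + κ * |a'| ^ m))) a) x
      = -(y * κ * m * (m - 1) * x ^ (m - 2)) / (ε + κ * x ^ m) ^ 2
        + 2 * y * κ ^ 2 * m ^ 2 * (x ^ (m - 1) * x ^ (m - 1)) / (ε + κ * x ^ m) ^ 3 := by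
    have hev : (fun a =>
        deriv (fun a' => (2 * y + (ε + κ * |a'| ^ m)) / (2 * (ε + κ * |a'| ^ m))) a)
        =ᶠ[nhds x] (fun a => -(y * (κ * (m * a ^ (m - 1)))) / (ε + κ * a ^ m) ^ 2) :=
      (eventually_gt_nhds hx).mono (fun t ht => hA t ht)
    rw [hev.deriv_eq]
    have hnum : HasDerivAt (fun a : ℝ => -(y * (κ * (m * a ^ (m - 1)))))
        (-(y * (κ * (m * ((m - 1) * x ^ (m - 1 - 1)))))) x :=
      ((((Real.hasDerivAt_rpow_const (Or.inl hx')).const_mul m).const_mul κ).const_mul y).neg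
    have hden : HasDerivAt (fun a : ℝ => (ε + κ * a ^ m) ^ 2)
        ((2 : ℕ) * (ε + κ * x ^ m) ^ (2 - 1) * (κ * (m * x ^ (m - 1)))) x :=
      (hδ x hx).pow 2
    have hdiv := hnum.div hden (by positivity)
    erw [hdiv.deriv]
    rw [show m - 1 - 1 = m - 2 by ring]
    have h21 : x ^ (m - 1) = x ^ (m - 2) * x := by
      rw [show m - 1 = (m - 2) + 1 by ring, Real.rpow_add hx, Real.rpow_one]
    rw [h21]
    field_simp
    ring
  rw [hT1]
  -- Term 2
  have hB : ∀ b : ℝ,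
      deriv (fun b' =>
        ((b' / (ε + κ * x ^ m)) ^ 2 - 1/4) * (2 - μ / (l + 2 * μ)) * (κ / 3) *
          (m * (m - 1) / 2) * b' * x ^ (m - 2)) b
      = ((2 - μ / (l + 2 * μ)) * (κ / 3) * (m * (m - 1) / 2) * x ^ (m - 2) /
          (ε + κ * x ^ m) ^ 2) * (3 * b ^ 2)
        + (-((2 - μ / (l + 2 * μ)) * (κ / 3) * (m * (m - 1) / 2) * x ^ (m - 2)) / 4) := by
    intro b
    have hfun : (fun b' =>
        ((b' / (ε + κ * x ^ m)) ^ 2 - 1/4) * (2 - μ / (l + 2 * μ)) * (κ / 3) *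
          (m * (m - 1) / 2) * b' * x ^ (m - 2))
        = fun b' => ((2 - μ / (l + 2 * μ)) * (κ / 3) * (m * (m - 1) / 2) * x ^ (m - 2) /
            (ε + κ * x ^ m) ^ 2) * b' ^ 3
          + (-((2 - μ / (l + 2 * μ)) * (κ / 3) * (m * (m - 1) / 2) * x ^ (m - 2)) / 4) * b' := by
      funext b'
      field_simp
      ring
    rw [hfun]
    have h := ((hasDerivAt_pow 3 b).const_mul
        ((2 - μ / (l + 2 * μ)) * (κ / 3) * (m * (m - 1) / 2) * x ^ (m - 2) /
          (ε + κ * x ^ m) ^ 2)).add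
      ((hasDerivAt_id' b).const_mul
        ((-((2 - μ / (l + 2 * μ)) * (κ / 3) * (m * (m - 1) / 2) * x ^ (m - 2)) / 4)))
    erw [h.deriv]
    norm_num
  rw [funext hB]
  have hT2 : deriv (fun b : ℝ =>
      ((2 - μ / (l + 2 * μ)) * (κ / 3) * (m * (m - 1) / 2) * x ^ (m - 2) /
          (ε + κ * x ^ m) ^ 2) * (3 * b ^ 2)
        + (-((2 - μ / (l + 2 * μ)) * (κ / 3) * (m * (m - 1) / 2) * x ^ (m - 2)) / 4)) y
      = ((2 - μ / (l + 2 * μ)) * (κ / 3) * (m * (m - 1) / 2) * x ^ (m - 2) /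
          (ε + κ * x ^ m) ^ 2) * (6 * y) := by
    have h := ((((hasDerivAt_pow 2 y).const_mul (3 : ℝ)).const_mul
        ((2 - μ / (l + 2 * μ)) * (κ / 3) * (m * (m - 1) / 2) * x ^ (m - 2) /
          (ε + κ * x ^ m) ^ 2)).add_const
        ((-((2 - μ / (l + 2 * μ)) * (κ / 3) * (m * (m - 1) / 2) * x ^ (m - 2)) / 4)))
    rw [h.deriv]
    push_cast
    ring
  rw [hT2]
  -- Term 3
  have hC : ∀ b : ℝ,
      deriv (fun a =>
        ((b / (ε + κ * |a| ^ m)) ^ 2 - 1/4) * (1 - μ / (l + 2 * μ)) * (m * κ / 2) *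
          a ^ (m - 1)) x
      = ((1 - μ / (l + 2 * μ)) * (m * κ / 2) *
          (-2 * κ * m * (x ^ (m - 1) * x ^ (m - 1)) / (ε + κ * x ^ m) ^ 3
            + (m - 1) * x ^ (m - 2) / (ε + κ * x ^ m) ^ 2)) * b ^ 2
        + (-((1 - μ / (l + 2 * μ)) * (m * κ / 2) * (m - 1) * x ^ (m - 2)) / 4) := by
    intro b
    have hev : (fun a =>
        ((b / (ε + κ * |a| ^ m)) ^ 2 - 1/4) * (1 - μ / (l + 2 * μ)) * (m * κ / 2) *
          a ^ (m - 1))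
        =ᶠ[nhds x] (fun a =>
        ((b / (ε + κ * a ^ m)) ^ 2 - 1/4) * (1 - μ / (l + 2 * μ)) * (m * κ / 2) *
          a ^ (m - 1)) :=
      (eventually_gt_nhds hx).mono (fun t ht => by simp only [abs_of_pos ht])
    rw [hev.deriv_eq]
    have hq : HasDerivAt (fun a : ℝ => b / (ε + κ * a ^ m))
        ((0 * (ε + κ * x ^ m) - b * (κ * (m * x ^ (m - 1)))) / (ε + κ * x ^ m) ^ 2) x :=
      (hasDerivAt_const x b).div (hδ x hx) hd.ne'
    have h := ((((hq.pow 2).sub_const (1/4)).mul_const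
        (1 - μ / (l + 2 * μ))).mul_const (m * κ / 2)).mul
      (Real.hasDerivAt_rpow_const (p := m - 1) (Or.inl hx'))
    erw [h.deriv]
    simp only [Pi.pow_apply]
    rw [show m - 1 - 1 = m - 2 by ring]
    have h21 : x ^ (m - 1) = x ^ (m - 2) * x := by
      rw [show m - 1 = (m - 2) + 1 by ring, Real.rpow_add hx, Real.rpow_one]
    rw [h21]
    simp only [div_pow]
    field_simp
    ring
  rw [funext hC]
  have hT3 : deriv (fun b : ℝ =>
      ((1 - μ / (l + 2 * μ)) * (m * κ / 2) *
          (-2 * κ * m * (x ^ (m - 1) * x ^ (m - 1)) / (ε + κ * x ^ m) ^ 3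
            + (m - 1) * x ^ (m - 2) / (ε + κ * x ^ m) ^ 2)) * b ^ 2
        + (-((1 - μ / (l + 2 * μ)) * (m * κ / 2) * (m - 1) * x ^ (m - 2)) / 4)) y
      = ((1 - μ / (l + 2 * μ)) * (m * κ / 2) *
          (-2 * κ * m * (x ^ (m - 1) * x ^ (m - 1)) / (ε + κ * x ^ m) ^ 3
            + (m - 1) * x ^ (m - 2) / (ε + κ * x ^ m) ^ 2)) * (2 * y) := by
    have h := (((hasDerivAt_pow 2 y).const_mul
        ((1 - μ / (l + 2 * μ)) * (m * κ / 2) *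
          (-2 * κ * m * (x ^ (m - 1) * x ^ (m - 1)) / (ε + κ * x ^ m) ^ 3
            + (m - 1) * x ^ (m - 2) / (ε + κ * x ^ m) ^ 2))).add_const
        ((-((1 - μ / (l + 2 * μ)) * (m * κ / 2) * (m - 1) * x ^ (m - 2)) / 4)))
    rw [h.deriv]
    norm_num
  rw [hT3]
  -- final algebra
  rw [show 2 * m - 2 = (m - 1) + (m - 1) by ring, Real.rpow_add hx]
  field_simp
  ring
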